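/- Every discrete-time P–local martingale S = (S_t)_{t∈ℕ₀} is a P–generalized martingale: for every t ∈ ℕ₀, the generalized conditional expectation satisfies E_P[|S_{t+1}| | F_t] < ∞ almost surely and E_P[S_{t+1} | F_t] = S_t almost surely. -/

import Mathlib

open MeasureTheory Filter Set ENNReal
open scoped Classical

noncomputable section

/-- Generalized conditional expectation `E[Y | G]` of a nonnegative random variable `Y`,
defined as the (a.s. monotone) limit `lim_k E[Y ∧ k | G]`, with values in `ℝ≥0∞`. -/
noncomputable def gce {Ω : Type*} {m0 : MeasurableSpace Ω} (G : MeasurableSpace Ω)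
    (μ : @Measure Ω m0) (Y : Ω → ℝ) : Ω → ℝ≥0∞ :=
  fun ω => ⨆ k : ℕ, ENNReal.ofReal ((μ[fun ω' => min (Y ω') (k : ℝ)|G]) ω)

/-- Generalized conditional expectation `E[W | G] = E[W⁺ | G] - E[W⁻ | G]` of a real random
variable `W` (meaningful when `E[|W| | G] < ∞` a.s.). -/
noncomputable def gcondexp {Ω : Type*} {m0 : MeasurableSpace Ω} (G : MeasurableSpace Ω)
    (μ : @Measure Ω m0) (W : Ω → ℝ) : Ω → ℝ :=
  fun ω => (@gce Ω m0 G μ (fun ω' => max (W ω') 0) ω).toReal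
    - (@gce Ω m0 G μ (fun ω' => max (-(W ω')) 0) ω).toReal

/-- A (possibly infinite) stopping time for a discrete-time filtration. -/
def IsStoppingTimeE {Ω : Type*} [m0 : MeasurableSpace Ω] (ℱ : Filtration ℕ m0)
    (τ : Ω → ℕ∞) : Prop :=
  ∀ n : ℕ, MeasurableSet[ℱ n] {ω | τ ω ≤ (n : ℕ∞)}

/-- The stopped process `S^τ 1_{τ > 0}`. -/
noncomputable def stoppedAt {Ω E : Type*} [Zero E] (S : ℕ → Ω → E) (τ : Ω → ℕ∞) :
    ℕ → Ω → E :=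
  fun t ω => if 0 < τ ω then S ((min (t : ℕ∞) (τ ω)).toNat) ω else 0

/-- A discrete-time `d`-dimensional process `S` is a local martingale if it is adapted and
there exist stopping times `τ n → ∞` a.s. such that each stopped process
`S^{τ n} 1_{τ n > 0}` is a martingale. -/
def IsLocalMartingale {Ω E : Type*} [m0 : MeasurableSpace Ω]
    [NormedAddCommGroup E] [NormedSpace ℝ E] [CompleteSpace E]
    (ℱ : Filtration ℕ m0) (μ : Measure Ω) (S : ℕ → Ω → E) : Prop :=
  StronglyAdapted ℱ S ∧ ∃ τ : ℕ → Ω → ℕ∞,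
    (∀ n, IsStoppingTimeE ℱ (τ n)) ∧
    (∀ᵐ ω ∂μ, ∀ M : ℕ, ∀ᶠ n in atTop, (M : ℕ∞) ≤ τ n ω) ∧
    (∀ n, Martingale (stoppedAt S (τ n)) ℱ μ)

section Helpers

open scoped Topology

variable {Ω : Type*} {G m0 : MeasurableSpace Ω} {μ : Measure Ω}

lemma integrable_min_nat [IsFiniteMeasure μ] {Y : Ω → ℝ}
    (hYm : AEStronglyMeasurable Y μ) (hY0 : ∀ ω, 0 ≤ Y ω) (k : ℕ) :
    Integrable (fun ω => min (Y ω) (k : ℝ)) μ := by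
  refine ⟨?_, ?_⟩
  · have : AEStronglyMeasurable (Y ⊓ (fun _ => (k : ℝ))) μ :=
      hYm.inf aestronglyMeasurable_const
    exact this
  · refine HasFiniteIntegral.of_bounded (C := (k : ℝ)) (ae_of_all μ fun ω => ?_)
    rw [Real.norm_eq_abs, abs_of_nonneg (le_min (hY0 ω) (Nat.cast_nonneg k))]
    exact min_le_right _ _

/-- For nonnegative integrable `Y`, the generalized conditional expectation agrees with the
usual conditional expectation. -/
lemma gce_ae_eq_condexp (hm : G ≤ m0) [IsProbabilityMeasure μ] {Y : Ω → ℝ}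
    (hY0 : ∀ ω, 0 ≤ Y ω) (hint : Integrable Y μ) :
    gce G μ Y =ᵐ[μ] fun ω => ENNReal.ofReal ((μ[Y|G]) ω) := by
  haveI : SigmaFinite (μ.trim hm) := by
    haveI := isFiniteMeasure_trim (μ := μ) hm
    infer_instance
  set f : ℕ → Ω → ℝ := fun k => μ[fun ω' => min (Y ω') (k : ℝ)|G] with hf
  have hfi : ∀ k : ℕ, Integrable (fun ω => min (Y ω) (k : ℝ)) μ :=
    integrable_min_nat hint.aestronglyMeasurable hY0
  have hle : ∀ k, f k ≤ᵐ[μ] μ[Y|G] := fun k =>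
    condExp_mono (hfi k) hint (Eventually.of_forall fun ω => min_le_left _ _)
  have hmono : ∀ᵐ ω ∂μ, Monotone fun k => f k ω := by
    have h : ∀ k : ℕ, f k ≤ᵐ[μ] f (k + 1) := fun k =>
      condExp_mono (hfi k) (hfi (k + 1))
        (Eventually.of_forall fun ω => min_le_min le_rfl (by exact_mod_cast Nat.le_succ k))
    filter_upwards [ae_all_iff.2 h] with ω hω
    exact monotone_nat_of_le_succ hω
  have hnn : ∀ k, 0 ≤ᵐ[μ] f k := fun k =>
    condExp_nonneg (Eventually.of_forall fun ω => le_min (hY0 ω) (Nat.cast_nonneg k))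
  have hcnn : 0 ≤ᵐ[μ] μ[Y|G] := condExp_nonneg (Eventually.of_forall hY0)
  have hleF : gce G μ Y ≤ᵐ[μ] fun ω => ENNReal.ofReal ((μ[Y|G]) ω) := by
    filter_upwards [ae_all_iff.2 hle] with ω hω
    exact iSup_le fun k => ENNReal.ofReal_le_ofReal (hω k)
  have hmeas : ∀ k, AEMeasurable (fun ω => ENNReal.ofReal (f k ω)) μ := fun k =>
    ((stronglyMeasurable_condExp.mono hm).measurable.ennreal_ofReal).aemeasurable
  have hlin : ∫⁻ ω, gce G μ Y ω ∂μ = ⨆ k, ∫⁻ ω, ENNReal.ofReal (f k ω) ∂μ := by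
    have : ∫⁻ ω, ⨆ k, ENNReal.ofReal (f k ω) ∂μ
        = ⨆ k, ∫⁻ ω, ENNReal.ofReal (f k ω) ∂μ := by
      refine lintegral_iSup' hmeas ?_
      filter_upwards [hmono] with ω hω
      exact fun i j hij => ENNReal.ofReal_le_ofReal (hω hij)
    simpa [gce] using this
  have hlk : ∀ k, ∫⁻ ω, ENNReal.ofReal (f k ω) ∂μ
      = ENNReal.ofReal (∫ ω, min (Y ω) (k : ℝ) ∂μ) := by
    intro k
    rw [← ofReal_integral_eq_lintegral_ofReal integrable_condExp (hnn k), integral_condExp hm]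
  have htend : Tendsto (fun k : ℕ => ∫ ω, min (Y ω) (k : ℝ) ∂μ) atTop (𝓝 (∫ ω, Y ω ∂μ)) := by
    refine tendsto_integral_of_dominated_convergence (fun ω => Y ω)
      (fun k => (hfi k).aestronglyMeasurable) hint ?_ ?_
    · refine fun k => ae_of_all μ fun ω => ?_
      show ‖min (Y ω) (k : ℝ)‖ ≤ Y ω
      have h1 : ‖min (Y ω) (k : ℝ)‖ = min (Y ω) (k : ℝ) := by
        rw [Real.norm_eq_abs]; exact abs_of_nonneg (le_min (hY0 ω) (Nat.cast_nonneg k))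
      rw [h1]
      exact min_le_left _ _
    · refine ae_of_all μ fun ω => ?_
      show Tendsto (fun k : ℕ => min (Y ω) (k : ℝ)) atTop (𝓝 (Y ω))
      refine tendsto_atTop_of_eventually_const (i₀ := ⌈Y ω⌉₊) fun k hk => ?_
      exact min_eq_left ((Nat.le_ceil _).trans (by exact_mod_cast hk))
  have hsup : (⨆ k : ℕ, ENNReal.ofReal (∫ ω, min (Y ω) (k : ℝ) ∂μ))
      = ENNReal.ofReal (∫ ω, Y ω ∂μ) := by
    have hmono' : Monotone fun k : ℕ => ENNReal.ofReal (∫ ω, min (Y ω) (k : ℝ) ∂μ) := by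
      intro i j hij
      exact ENNReal.ofReal_le_ofReal (integral_mono (hfi i) (hfi j)
        (fun ω => min_le_min le_rfl (by exact_mod_cast hij : (i : ℝ) ≤ j)))
    exact tendsto_nhds_unique (tendsto_atTop_iSup hmono')
      ((ENNReal.continuous_ofReal.tendsto _).comp htend)
  have hFint : ∫⁻ ω, gce G μ Y ω ∂μ = ENNReal.ofReal (∫ ω, Y ω ∂μ) := by
    rw [hlin]; simp_rw [hlk]; exact hsup
  have hGint : ∫⁻ ω, ENNReal.ofReal ((μ[Y|G]) ω) ∂μ = ENNReal.ofReal (∫ ω, Y ω ∂μ) := by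
    rw [← ofReal_integral_eq_lintegral_ofReal integrable_condExp hcnn, integral_condExp hm]
  refine ae_eq_of_ae_le_of_lintegral_le hleF ?_ ?_ ?_
  · rw [hFint]; exact ENNReal.ofReal_ne_top
  · exact ((stronglyMeasurable_condExp.mono hm).measurable.ennreal_ofReal).aemeasurable
  · rw [hFint, hGint]

/-- Localization of `gce` to a `G`-measurable set. -/
lemma gce_eq_indicator_on (hm : G ≤ m0) [IsProbabilityMeasure μ] {Y : Ω → ℝ}
    (hY0 : ∀ ω, 0 ≤ Y ω) (hYm : AEStronglyMeasurable Y μ) {B : Set Ω}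
    (hB : MeasurableSet[G] B) :
    ∀ᵐ ω ∂μ, ω ∈ B → gce G μ Y ω = gce G μ (B.indicator Y) ω := by
  have hYm' : AEStronglyMeasurable (B.indicator Y) μ := hYm.indicator (hm _ hB)
  have hY0' : ∀ ω, 0 ≤ B.indicator Y ω := fun ω => indicator_nonneg (fun a _ => hY0 a) ω
  have hfi : ∀ k : ℕ, Integrable (fun ω => min (Y ω) (k : ℝ)) μ :=
    integrable_min_nat hYm hY0
  have hfi' : ∀ k : ℕ, Integrable (fun ω => min (B.indicator Y ω) (k : ℝ)) μ :=
    integrable_min_nat hYm' hY0'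
  have hk : ∀ k : ℕ, ∀ᵐ ω ∂μ, ω ∈ B →
      (μ[fun ω' => min (Y ω') (k : ℝ)|G]) ω
        = (μ[fun ω' => min (B.indicator Y ω') (k : ℝ)|G]) ω := by
    intro k
    have h1 := condExp_indicator (μ := μ) (m := G) (hfi k) hB
    have h2 := condExp_indicator (μ := μ) (m := G) (hfi' k) hB
    have heq : B.indicator (fun ω => min (Y ω) (k : ℝ))
        = B.indicator (fun ω => min (B.indicator Y ω) (k : ℝ)) := by
      funext ω
      by_cases hω : ω ∈ B <;> simp [indicator, hω]
    rw [heq] at h1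
    filter_upwards [h1, h2] with ω h1ω h2ω hωB
    have := h1ω.symm.trans h2ω
    simpa [indicator_of_mem hωB] using this
  filter_upwards [ae_all_iff.2 hk] with ω hω hB'
  simp only [gce]
  exact iSup_congr fun k => by rw [hω k hB']

/-- On a `G`-measurable set `B` on which `Y` is "integrable", `gce` is given by the
conditional expectation of `B.indicator Y`. -/
lemma gce_on (hm : G ≤ m0) [IsProbabilityMeasure μ] {Y : Ω → ℝ}
    (hY0 : ∀ ω, 0 ≤ Y ω) (hYm : AEStronglyMeasurable Y μ) {B : Set Ω}
    (hB : MeasurableSet[G] B) (hint : Integrable (B.indicator Y) μ) :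
    ∀ᵐ ω ∂μ, ω ∈ B → gce G μ Y ω = ENNReal.ofReal ((μ[B.indicator Y|G]) ω) := by
  have h2 := gce_ae_eq_condexp hm (fun ω => indicator_nonneg (fun a _ => hY0 a) ω) hint
  filter_upwards [gce_eq_indicator_on hm hY0 hYm hB, h2] with ω h1 h2 hωB
  rw [h1 hωB, h2]

lemma indicator_pos_part (B : Set Ω) (W : Ω → ℝ) :
    B.indicator (fun ω => max (W ω) 0) = fun ω => max (B.indicator W ω) 0 := by
  funext ω
  by_cases hω : ω ∈ B <;> simp [indicator, hω]

lemma indicator_neg_part (B : Set Ω) (W : Ω → ℝ) :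
    B.indicator (fun ω => max (-(W ω)) 0) = fun ω => max (-(B.indicator W ω)) 0 := by
  funext ω
  by_cases hω : ω ∈ B <;> simp [indicator, hω]

/-- On a `G`-measurable set `B` on which `W` is "integrable", `gcondexp` is given by the
conditional expectation of `B.indicator W`. -/
lemma gcondexp_on (hm : G ≤ m0) [IsProbabilityMeasure μ] {W : Ω → ℝ}
    (hWm : AEStronglyMeasurable W μ) {B : Set Ω}
    (hB : MeasurableSet[G] B) (hint : Integrable (B.indicator W) μ) :
    ∀ᵐ ω ∂μ, ω ∈ B → gcondexp G μ W ω = (μ[B.indicator W|G]) ω := by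
  have hWp : AEStronglyMeasurable (fun ω => max (W ω) 0) μ := by
    have : AEStronglyMeasurable (W ⊔ (fun _ => (0 : ℝ))) μ :=
      hWm.sup aestronglyMeasurable_const
    exact this
  have hWn : AEStronglyMeasurable (fun ω => max (-(W ω)) 0) μ := by
    have : AEStronglyMeasurable ((-W) ⊔ (fun _ => (0 : ℝ))) μ :=
      hWm.neg.sup aestronglyMeasurable_const
    exact this
  have hintp : Integrable (B.indicator (fun ω => max (W ω) 0)) μ := by
    rw [indicator_pos_part]; exact hint.pos_part
  have hintn : Integrable (B.indicator (fun ω => max (-(W ω)) 0)) μ := by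
    rw [indicator_neg_part]
    exact hint.neg.pos_part
  have hpos := gce_on hm (fun ω => le_max_right _ _) hWp hB hintp
  have hneg := gce_on hm (fun ω => le_max_right _ _) hWn hB hintn
  have hnnp : 0 ≤ᵐ[μ] μ[B.indicator (fun ω => max (W ω) 0)|G] :=
    condExp_nonneg (Eventually.of_forall fun ω =>
      indicator_nonneg (fun a _ => le_max_right (W a) 0) ω)
  have hnnn : 0 ≤ᵐ[μ] μ[B.indicator (fun ω => max (-(W ω)) 0)|G] :=
    condExp_nonneg (Eventually.of_forall fun ω =>
      indicator_nonneg (fun a _ => le_max_right (-(W a)) 0) ω)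
  have hsub : μ[B.indicator W|G]
      =ᵐ[μ] μ[B.indicator (fun ω => max (W ω) 0)|G]
        - μ[B.indicator (fun ω => max (-(W ω)) 0)|G] := by
    have hdiff : B.indicator (fun ω => max (W ω) 0) - B.indicator (fun ω => max (-(W ω)) 0)
        = B.indicator W := by
      funext ω
      simp only [Pi.sub_apply]
      rw [indicator_pos_part, indicator_neg_part]
      exact max_zero_sub_max_neg_zero_eq_self (B.indicator W ω)
    rw [← hdiff]
    exact condExp_sub hintp hintn G
  filter_upwards [hpos, hneg, hsub, hnnp, hnnn] with ω h1 h2 h3 h4 h5 hωB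
  have e1 := h1 hωB
  have e2 := h2 hωB
  simp only [gcondexp, e1, e2, ENNReal.toReal_ofReal h4, ENNReal.toReal_ofReal h5]
  rw [h3]
  simp

/-- Conditional expectation commutes with continuous linear maps. -/
lemma condexp_clm {E F : Type*} [NormedAddCommGroup E] [NormedSpace ℝ E] [CompleteSpace E]
    [NormedAddCommGroup F] [NormedSpace ℝ F] [CompleteSpace F]
    (hm : G ≤ m0) [IsProbabilityMeasure μ] (L : E →L[ℝ] F) {f : Ω → E}
    (hf : Integrable f μ) :
    μ[fun ω => L (f ω)|G] =ᵐ[μ] fun ω => L ((μ[f|G]) ω) := by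
  haveI : SigmaFinite (μ.trim hm) := by
    haveI := isFiniteMeasure_trim (μ := μ) hm
    infer_instance
  refine (ae_eq_condExp_of_forall_setIntegral_eq hm (L.integrable_comp hf)
    (fun s _ _ => (L.integrable_comp integrable_condExp).integrableOn)
    (fun s hs _ => ?_) ?_).symm
  · rw [L.integral_comp_comm integrable_condExp.integrableOn,
      L.integral_comp_comm hf.integrableOn, setIntegral_condExp hm hf hs]
  · exact (L.continuous.comp_stronglyMeasurable stronglyMeasurable_condExp).aestronglyMeasurable

end Helpers

/-- **Proposition 1.** Every discrete-time local martingale is a generalized martingale: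
`E[|S_{t+1}| | F_t] < ∞` a.s. and `E[S_{t+1} | F_t] = S_t` a.s. (generalized conditional
expectations, taken componentwise for the vector equality). -/
theorem stmt2 {Ω : Type*} {m0 : MeasurableSpace Ω} (μ : Measure Ω) [IsProbabilityMeasure μ]
    (ℱ : Filtration ℕ m0) {d : ℕ} (S : ℕ → Ω → EuclideanSpace ℝ (Fin d))
    (hS : IsLocalMartingale ℱ μ S) :
    ∀ t : ℕ,
      (∀ᵐ ω ∂μ, gce (ℱ t) μ (fun ω' => ‖S (t + 1) ω'‖) ω < ⊤) ∧
      (∀ i : Fin d, ∀ᵐ ω ∂μ,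
        gcondexp (ℱ t) μ (fun ω' => S (t + 1) ω' i) ω = S t ω i) := by
  obtain ⟨hadapt, τ, hτstop, hτae, hτmart⟩ := hS
  intro t
  have hm : ℱ t ≤ m0 := ℱ.le t
  -- the sets B n = {τ n ≥ t+1}
  set B : ℕ → Set Ω := fun n => {ω | ((t + 1 : ℕ) : ℕ∞) ≤ τ n ω} with hBdef
  have hBmeas : ∀ n, MeasurableSet[ℱ t] (B n) := by
    intro n
    have : B n = {ω | τ n ω ≤ (t : ℕ∞)}ᶜ := by
      ext ω
      simp only [hBdef, mem_setOf_eq, mem_compl_iff, not_le]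
      rw [show ((t + 1 : ℕ) : ℕ∞) = (t : ℕ∞) + 1 by exact_mod_cast Nat.cast_succ t]
      exact ENat.add_one_le_iff (by simp)
    rw [this]
    exact (hτstop n t).compl
  -- the stopped processes agree with S on B n at times t and t+1
  have hMeq1 : ∀ n, ∀ ω ∈ B n, stoppedAt S (τ n) (t + 1) ω = S (t + 1) ω := by
    intro n ω hω
    have hω' : ((t + 1 : ℕ) : ℕ∞) ≤ τ n ω := hω
    have h0 : (0 : ℕ∞) < τ n ω :=
      lt_of_lt_of_le (by exact_mod_cast Nat.succ_pos t) hω'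
    simp only [stoppedAt, if_pos h0, min_eq_left hω', ENat.toNat_coe]
  have hMeq0 : ∀ n, ∀ ω ∈ B n, stoppedAt S (τ n) t ω = S t ω := by
    intro n ω hω
    have hω' : ((t + 1 : ℕ) : ℕ∞) ≤ τ n ω := hω
    have h0 : (0 : ℕ∞) < τ n ω :=
      lt_of_lt_of_le (by exact_mod_cast Nat.succ_pos t) hω'
    have hle : ((t : ℕ) : ℕ∞) ≤ τ n ω :=
      le_trans (by exact_mod_cast Nat.le_succ t) hω'
    simp only [stoppedAt, if_pos h0, min_eq_left hle, ENat.toNat_coe]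
  -- a.e. covering by the B n
  have hcov : ∀ᵐ ω ∂μ, ∃ n, ω ∈ B n := by
    filter_upwards [hτae] with ω hω
    obtain ⟨n, hn⟩ := (hω (t + 1)).exists
    exact ⟨n, hn⟩
  have hSmeas : AEStronglyMeasurable (S (t + 1)) μ :=
    ((hadapt (t + 1)).mono (ℱ.le (t + 1))).aestronglyMeasurable
  constructor
  · -- finiteness of gce of the norm
    have hn : ∀ n : ℕ, ∀ᵐ ω ∂μ, ω ∈ B n →
        gce (ℱ t) μ (fun ω' => ‖S (t + 1) ω'‖) ω < ⊤ := by
      intro n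
      have hint : Integrable ((B n).indicator fun ω' => ‖S (t + 1) ω'‖) μ := by
        have heq : (B n).indicator (fun ω' => ‖S (t + 1) ω'‖)
            = (B n).indicator (fun ω' => ‖stoppedAt S (τ n) (t + 1) ω'‖) := by
          funext ω
          by_cases hω : ω ∈ B n
          · simp [indicator_of_mem hω, hMeq1 n ω hω]
          · simp [indicator_of_notMem hω]
        rw [heq]
        exact (((hτmart n).integrable (t + 1)).norm).indicator (hm _ (hBmeas n))
      filter_upwards [gce_on hm (fun ω => norm_nonneg _) hSmeas.norm (hBmeas n) hint]
        with ω h hωB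
      rw [h hωB]
      exact ENNReal.ofReal_lt_top
    filter_upwards [ae_all_iff.2 hn, hcov] with ω h1 h2
    obtain ⟨n, hn⟩ := h2
    exact h1 n hn
  · -- the conditional expectation identity, coordinatewise
    intro i
    have hWmeas : AEStronglyMeasurable (fun ω' => S (t + 1) ω' i) μ :=
      (EuclideanSpace.proj (𝕜 := ℝ) i).continuous.comp_aestronglyMeasurable hSmeas
    have hn : ∀ n : ℕ, ∀ᵐ ω ∂μ, ω ∈ B n →
        gcondexp (ℱ t) μ (fun ω' => S (t + 1) ω' i) ω = S t ω i := by
      intro n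
      set M : ℕ → Ω → EuclideanSpace ℝ (Fin d) := stoppedAt S (τ n) with hMdef
      have hMint : Integrable (M (t + 1)) μ := (hτmart n).integrable (t + 1)
      have hMiint : Integrable (fun ω => M (t + 1) ω i) μ :=
        (EuclideanSpace.proj (𝕜 := ℝ) i).integrable_comp hMint
      have hindeq : (B n).indicator (fun ω' => S (t + 1) ω' i)
          = (B n).indicator (fun ω' => M (t + 1) ω' i) := by
        funext ω
        by_cases hω : ω ∈ B n
        · rw [indicator_of_mem hω, indicator_of_mem hω,
            show M (t + 1) ω = S (t + 1) ω from hMeq1 n ω hω]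
        · rw [indicator_of_notMem hω, indicator_of_notMem hω]
      have hint : Integrable ((B n).indicator fun ω' => S (t + 1) ω' i) μ := by
        rw [hindeq]
        exact hMiint.indicator (hm _ (hBmeas n))
      -- conditional expectation chain
      have hcond1 : μ[(B n).indicator (fun ω' => M (t + 1) ω' i)|ℱ t]
          =ᵐ[μ] (B n).indicator (μ[fun ω' => M (t + 1) ω' i|ℱ t]) :=
        condExp_indicator hMiint (hBmeas n)
      have hcond2 : μ[fun ω' => M (t + 1) ω' i|ℱ t]
          =ᵐ[μ] fun ω => ((μ[M (t + 1)|ℱ t]) ω) i := by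
        have := condexp_clm (μ := μ) hm (EuclideanSpace.proj (𝕜 := ℝ) i) hMint
        simpa using this
      have hcond3 : μ[M (t + 1)|ℱ t] =ᵐ[μ] M t :=
        (hτmart n).condExp_ae_eq (Nat.le_succ t)
      filter_upwards [gcondexp_on hm hWmeas (hBmeas n) hint, hcond1, hcond2, hcond3]
        with ω h1 h2 h3 h4 hωB
      rw [h1 hωB, hindeq, h2, indicator_of_mem hωB, h3, h4,
        show M t ω = S t ω from hMeq0 n ω hωB]
    filter_upwards [ae_all_iff.2 hn, hcov] with ω h1 h2
    obtain ⟨n, hn⟩ := h2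
    exact h1 n hn

end
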